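/- Let (G_i)_{i∈ℕ} be an inverse sequence of finitely presented groups with bonding homomorphisms λ_i : G_i → G_{i−1} for i ≥ 1, and suppose that for every i ≥ 1 the range of λ_i equals the range of the composite λ_i ∘ λ_{i+1} (i.e. λ_i(G_i) = λ_i(λ_{i+1}(G_{i+1}))). Then there exist normal subgroups H_i ⊴ G_i for i ≥ 1 such that: (1) H_i is contained in ker(λ_i), so that λ_i induces a homomorphism G_i/H_i → G_{i−1}; (2) each quotient group G_i/H_i is finitely presented; and (3) for every i ≥ 2 the induced homomorphism μ_i : G_i/H_i → G_{i−1}/H_{i−1}, defined by μ_i(g H_i) = λ_i(g) H_{i−1}, is surjective. -/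

import Mathlib

/-- A group is finitely presented if it is isomorphic to the quotient of a free group on
finitely many generators by the normal closure of a finite set of relators. -/
def FinitelyPresentedGroup (G : Type*) [Group G] : Prop :=
  ∃ (n : ℕ) (R : Set (FreeGroup (Fin n))), R.Finite ∧ Nonempty (G ≃* PresentedGroup R)

/-- A finitely presented group has a finite generating set. -/
lemma FinitelyPresentedGroup.exists_finite_gen {G : Type*} [Group G]
    (h : FinitelyPresentedGroup G) : ∃ S : Set G, S.Finite ∧ Subgroup.closure S = ⊤ := by
  obtain ⟨n, R, hR, ⟨e⟩⟩ := h
  refine ⟨e.symm '' (Set.range (PresentedGroup.of (rels := R))), (Set.finite_range _).image _, ?_⟩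
  show Subgroup.closure ((e.symm : PresentedGroup R →* G) '' _) = ⊤
  rw [← MonoidHom.map_closure (e.symm : PresentedGroup R →* G),
    PresentedGroup.closure_range_of, ← MonoidHom.range_eq_map,
    MonoidHom.range_eq_top.2 e.symm.surjective]

/-- Quotient of a finitely presented group by the normal closure of a finite set is
finitely presented. -/
lemma FinitelyPresentedGroup.quotient_normalClosure {G : Type*} [Group G]
    (h : FinitelyPresentedGroup G) (T : Set G) (hT : T.Finite) :
    FinitelyPresentedGroup (G ⧸ Subgroup.normalClosure T) := by
  obtain ⟨n, R, hR, ⟨e⟩⟩ := h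
  set f : G → FreeGroup (Fin n) :=
    fun g => Function.surjInv (PresentedGroup.mk_surjective R) (e g) with hf
  have hfmk : ∀ g : G, PresentedGroup.mk R (f g) = e g := fun g =>
    Function.surjInv_eq (PresentedGroup.mk_surjective R) (e g)
  refine ⟨n, R ∪ f '' T, hR.union (hT.image f), ⟨?_⟩⟩
  have h1 : Subgroup.normalClosure R ≤ Subgroup.normalClosure (R ∪ f '' T) :=
    Subgroup.normalClosure_mono Set.subset_union_left
  have e2 : (FreeGroup (Fin n) ⧸ Subgroup.normalClosure R) ⧸
      (Subgroup.normalClosure (R ∪ f '' T)).map (QuotientGroup.mk' (Subgroup.normalClosure R))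
      ≃* PresentedGroup (R ∪ f '' T) :=
    QuotientGroup.quotientQuotientEquivQuotient _ _ h1
  have hmap : (Subgroup.normalClosure (R ∪ f '' T)).map
      (QuotientGroup.mk' (Subgroup.normalClosure R))
      = Subgroup.normalClosure ((e : G →* PresentedGroup R) '' T) := by
    rw [Subgroup.map_normalClosure _ _ (QuotientGroup.mk'_surjective _)]
    apply le_antisymm
    · refine @Subgroup.normalClosure_le_normal _ _ _ _ Subgroup.normalClosure_normal ?_
      rw [Set.image_union]
      apply Set.union_subset
      · intro x hx
        obtain ⟨r, hr, rfl⟩ := hx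
        have : (QuotientGroup.mk' (Subgroup.normalClosure R)) r = 1 := by
          rw [QuotientGroup.mk'_apply, QuotientGroup.eq_one_iff]
          exact Subgroup.subset_normalClosure hr
        rw [this]
        exact one_mem _
      · intro x hx
        obtain ⟨y, ⟨t, ht, rfl⟩, rfl⟩ := hx
        apply Subgroup.subset_normalClosure
        exact ⟨t, ht, (hfmk t).symm⟩
    · refine @Subgroup.normalClosure_le_normal _ _ _ _ Subgroup.normalClosure_normal ?_
      intro x hx
      obtain ⟨t, ht, rfl⟩ := hx
      apply Subgroup.subset_normalClosure
      rw [Set.image_union]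
      exact Or.inr ⟨f t, ⟨t, ht, rfl⟩, hfmk t⟩
  have hmapT : (Subgroup.normalClosure T).map (e : G →* PresentedGroup R)
      = Subgroup.normalClosure ((e : G →* PresentedGroup R) '' T) :=
    Subgroup.map_normalClosure _ _ e.surjective
  have e1 : G ⧸ Subgroup.normalClosure T ≃*
      PresentedGroup R ⧸ Subgroup.normalClosure ((e : G →* PresentedGroup R) '' T) :=
    QuotientGroup.congr _ _ e hmapT
  haveI : (Subgroup.map (QuotientGroup.mk' (Subgroup.normalClosure R)) (Subgroup.normalClosure (R ∪ f '' T))).Normal := QuotientGroup.map_normal _ _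
  exact e1.trans (MulEquiv.trans (@QuotientGroup.quotientMulEquivOfEq (FreeGroup (Fin n) ⧸ Subgroup.normalClosure R) _ _ _ Subgroup.normalClosure_normal this hmap.symm :
    PresentedGroup R ⧸ Subgroup.normalClosure ((e : G →* PresentedGroup R) '' T) ≃*
      (FreeGroup (Fin n) ⧸ Subgroup.normalClosure R) ⧸
        (Subgroup.normalClosure (R ∪ f '' T)).map (QuotientGroup.mk' (Subgroup.normalClosure R))) e2)

/-- **Lemma gp5 (Ferry).** Given an inverse sequence of finitely presented groups
`… → G 2 → G 1 → G 0` with bonding maps `l i : G (i+1) →* G i` (so `l i` plays the role of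
`λ_{i+1} : G_{i+1} → G_i`) satisfying the Mittag–Leffler condition
`range (λ_i) = range (λ_i ∘ λ_{i+1})`, there are normal subgroups `H i ⊴ G (i+1)`
contained in the kernels of the bonding maps such that each quotient `G (i+1) ⧸ H i` is
finitely presented and the induced maps between successive quotients are surjective. -/
theorem semistable_pro_equivalent_to_surjective_sequence
    {G : ℕ → Type*} [∀ i, Group (G i)] (l : ∀ i, G (i + 1) →* G i)
    (hFP : ∀ i, FinitelyPresentedGroup (G i))
    (hML : ∀ i, (l i).range = ((l i).comp (l (i + 1))).range) :
    ∃ (H : ∀ i, Subgroup (G (i + 1))) (hN : ∀ i, (H i).Normal),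
      (∀ i, H i ≤ (l i).ker) ∧
      (∀ i, letI := hN i; FinitelyPresentedGroup (G (i + 1) ⧸ H i)) ∧
      (∀ i, letI := hN i; letI := hN (i + 1);
        ∃ μ : (G (i + 2) ⧸ H (i + 1)) →* (G (i + 1) ⧸ H i),
          (∀ g : G (i + 2), μ (QuotientGroup.mk g) = QuotientGroup.mk (l (i + 1) g)) ∧
          Function.Surjective μ) := by
  -- choose Mittag-Leffler witnesses
  have hwit : ∀ i (x : G (i + 1)), ∃ z : G (i + 2), l i (l (i + 1) z) = l i x := by
    intro i x
    have hx : l i x ∈ (l i).range := ⟨x, rfl⟩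
    rw [hML i] at hx
    obtain ⟨z, hz⟩ := hx
    exact ⟨z, hz⟩
  choose y hy using hwit
  -- finite generating sets
  choose S hSfin hSgen using fun i => (hFP i).exists_finite_gen
  set D : ∀ i, Set (G (i + 1)) :=
    fun i => (fun x => x⁻¹ * l (i + 1) (y i x)) '' S (i + 1) with hD
  refine ⟨fun i => Subgroup.normalClosure (D i), fun i => Subgroup.normalClosure_normal,
    ?_, ?_, ?_⟩
  · -- contained in kernels
    intro i
    apply Subgroup.normalClosure_le_normal
    rintro _ ⟨x, hx, rfl⟩
    rw [SetLike.mem_coe, MonoidHom.mem_ker, map_mul, map_inv, hy i x, inv_mul_cancel]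
  · -- finitely presented quotients
    intro i
    exact (hFP (i + 1)).quotient_normalClosure _ ((hSfin (i + 1)).image _)
  · -- surjective induced maps
    intro i
    have hker : Subgroup.normalClosure (D (i + 1)) ≤
        ((QuotientGroup.mk' (Subgroup.normalClosure (D i))).comp (l (i + 1))).ker := by
      apply Subgroup.normalClosure_le_normal
      rintro _ ⟨x, hx, rfl⟩
      rw [SetLike.mem_coe, MonoidHom.mem_ker, MonoidHom.comp_apply, map_mul, map_inv,
        hy (i + 1) x, inv_mul_cancel, map_one]
    refine ⟨QuotientGroup.lift _ _ hker, fun g => rfl, ?_⟩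
    rw [← MonoidHom.range_eq_top]
    have htop : Subgroup.closure ((QuotientGroup.mk' (Subgroup.normalClosure (D i))) ''
        S (i + 1)) = ⊤ := by
      rw [← MonoidHom.map_closure, hSgen (i + 1), ← MonoidHom.range_eq_map,
        MonoidHom.range_eq_top.2 (QuotientGroup.mk'_surjective _)]
    rw [← top_le_iff, ← htop]
    apply Subgroup.closure_le _ |>.2
    rintro _ ⟨x, hx, rfl⟩
    refine ⟨QuotientGroup.mk (y i x), ?_⟩
    show QuotientGroup.mk (l (i + 1) (y i x)) = _
    rw [QuotientGroup.mk'_apply, QuotientGroup.eq]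
    have hmem : x⁻¹ * l (i + 1) (y i x) ∈ Subgroup.normalClosure (D i) :=
      Subgroup.subset_normalClosure ⟨x, hx, rfl⟩
    simpa [mul_inv_rev] using Subgroup.inv_mem _ hmem
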